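/- Let q ∈ ℂ with q^m ≠ 1 for every positive integer m. Let C₁₁, C₁₂, C₂₁, C₂₂ and C'₁₁, C'₁₂, C'₂₁, C'₂₂ be 4×4 complex matrices, each quadruple satisfying the Dipper–Donkin quantum GL₂ relations with invertible quantum determinant, and suppose the 2×2 block matrices M = (C_{ik}) and M' = (C'_{ik}) (8×8 complex matrices) are invertible, with inverse blocks C*_{kj} and C'*_{kj} respectively, so that Σ_k C_{ik}C*_{kj} = δ_{ij}·I and Σ_k C*_{ik}C_{kj} = δ_{ij}·I (and similarly for the primed matrices). Define the actions c_{ij}·v = Σ_k C_{ik} v C*_{kj} and c_{ij}*v = Σ_k C'_{ik} v C'*_{kj} on v ∈ M₄(ℂ). Then the following are equivalent: (i) there exists an invertible u ∈ M₄(ℂ) such that c_{ij}*(u v u⁻¹) = u·(c_{ij}·v)·u⁻¹ for all v ∈ M₄(ℂ) and all i,j ∈ {1,2}; (ii) there exist an invertible u ∈ M₄(ℂ) and nonzero complex numbers α₁, α₂ such that C'₁₁ = uC₁₁u⁻¹·α₁, C'₂₁ = uC₂₁u⁻¹·α₁, C'₁₂ = uC₁₂u⁻¹·α₂, and C'₂₂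 = uC₂₂u⁻¹·α₂. Moreover, if such u can be taken to be the identity, the two actions coincide. -/

import Mathlib

open Matrix

namespace DDaux

abbrev M4 := Matrix (Fin 4) (Fin 4) ℂ

lemma smul_unit_eq_zero {X : M4} (hX : IsUnit X) {lam : ℂ} (h : lam • X = 0) : lam = 0 := by
  obtain ⟨x, rfl⟩ := hX
  have h1 : lam • (1 : M4) = 0 := by
    calc lam • (1 : M4) = (lam • (x : M4)) * ((x⁻¹ : (M4)ˣ) : M4) := by
          rw [smul_mul_assoc, x.mul_inv]
      _ = 0 := by rw [h, zero_mul]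
  rcases smul_eq_zero.mp h1 with h0 | h0
  · exact h0
  · exact absurd h0 one_ne_zero

lemma coeffs_zero {C S : Fin 2 → Fin 2 → M4}
    (hS2 : ∀ i j : Fin 2, ∑ k : Fin 2, S i k * C k j = if i = j then (1 : M4) else 0)
    (lam : Fin 2 → ℂ) (h : ∀ i : Fin 2, ∑ k : Fin 2, lam k • C i k = 0) :
    ∀ k, lam k = 0 := by
  intro m
  have h1 : lam m • (1 : M4) = 0 := by
    calc lam m • (1 : M4) = ∑ k : Fin 2, lam k • (if m = k then (1 : M4) else 0) := by
          simp [smul_ite, Finset.sum_ite_eq]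
      _ = ∑ k : Fin 2, lam k • (∑ i : Fin 2, S m i * C i k) := by
          simp_rw [hS2]
      _ = ∑ i : Fin 2, S m i * (∑ k : Fin 2, lam k • C i k) := by
          simp_rw [Finset.smul_sum, Finset.mul_sum, mul_smul_comm]
          rw [Finset.sum_comm]
      _ = 0 := by simp [h]
  rcases smul_eq_zero.mp h1 with h0 | h0
  · exact h0
  · exact absurd h0 one_ne_zero

lemma contract_right {A B P R W : Fin 2 → Fin 2 → M4}
    (hPW : ∀ k l : Fin 2, ∑ j : Fin 2, P k j * W j l = if k = l then (1 : M4) else 0)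
    (hact : ∀ (v : M4) (i j : Fin 2),
      ∑ k : Fin 2, A i k * v * P k j = ∑ k : Fin 2, B i k * v * R k j) :
    ∀ (v : M4) (i l : Fin 2),
      A i l * v = ∑ k : Fin 2, B i k * v * (∑ j : Fin 2, R k j * W j l) := by
  intro v i l
  calc A i l * v = ∑ k : Fin 2, A i k * v * (if k = l then (1 : M4) else 0) := by
        simp [mul_ite, Finset.sum_ite_eq']
    _ = ∑ k : Fin 2, A i k * v * (∑ j : Fin 2, P k j * W j l) := by simp_rw [hPW]
    _ = ∑ j : Fin 2, (∑ k : Fin 2, A i k * v * P k j) * W j l := by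
        simp_rw [Finset.mul_sum, Finset.sum_mul, ← mul_assoc]
        rw [Finset.sum_comm]
    _ = ∑ j : Fin 2, (∑ k : Fin 2, B i k * v * R k j) * W j l := by simp_rw [hact]
    _ = ∑ k : Fin 2, B i k * v * (∑ j : Fin 2, R k j * W j l) := by
        simp_rw [Finset.mul_sum, Finset.sum_mul, ← mul_assoc]
        rw [Finset.sum_comm]

lemma central_of {A B G T : Fin 2 → Fin 2 → M4}
    (hTB : ∀ m k : Fin 2, ∑ i : Fin 2, T m i * B i k = if m = k then (1 : M4) else 0)
    (h : ∀ (v : M4) (i l : Fin 2), A i l * v = ∑ k : Fin 2, B i k * v * G k l) :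
    ∀ m l : Fin 2, ∃ r : ℂ, G m l = r • (1 : M4) := by
  intro m l
  have key : ∀ v : M4, (∑ i : Fin 2, T m i * A i l) * v = v * G m l := by
    intro v
    calc (∑ i : Fin 2, T m i * A i l) * v = ∑ i : Fin 2, T m i * (A i l * v) := by
          simp_rw [Finset.sum_mul, mul_assoc]
      _ = ∑ i : Fin 2, T m i * (∑ k : Fin 2, B i k * v * G k l) := by simp_rw [h]
      _ = ∑ k : Fin 2, (∑ i : Fin 2, T m i * B i k) * (v * G k l) := by
          simp_rw [Finset.mul_sum, Finset.sum_mul, ← mul_assoc]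
          rw [Finset.sum_comm]
      _ = v * G m l := by
          simp_rw [hTB]
          simp [ite_mul, Finset.sum_ite_eq]
  have hGeq : ∑ i : Fin 2, T m i * A i l = G m l := by simpa using key 1
  have hcomm : ∀ v : M4, G m l * v = v * G m l := fun v => by
    conv_lhs => rw [← hGeq]
    exact key v
  obtain ⟨r, hr⟩ := Matrix.mem_range_scalar_of_commute_single
    (M := G m l) (fun i j _ => (hcomm _).symm)
  refine ⟨r, ?_⟩
  rw [← hr, Matrix.scalar_apply, smul_one_eq_diagonal]

abbrev M4' := Matrix (Fin 4) (Fin 4) ℂ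

lemma helper_back {C C' S S' : Fin 2 → Fin 2 → M4'} {u : M4'} {α : Fin 2 → ℂ}
    (hu : IsUnit u)
    (hS1 : ∀ i j : Fin 2, ∑ k : Fin 2, C i k * S k j = if i = j then (1 : M4') else 0)
    (hS2' : ∀ i j : Fin 2, ∑ k : Fin 2, S' i k * C' k j = if i = j then (1 : M4') else 0)
    (hα : ∀ j : Fin 2, α j ≠ 0)
    (hC' : ∀ i j : Fin 2, C' i j = α j • (u * C i j * u⁻¹)) :
    ∀ (v : M4') (i j : Fin 2),
      ∑ k : Fin 2, C' i k * v * S' k j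
        = u * (∑ k : Fin 2, C i k * (u⁻¹ * v * u) * S k j) * u⁻¹ := by
  have hud : IsUnit u.det := (Matrix.isUnit_iff_isUnit_det u).mp hu
  have huu : u * u⁻¹ = 1 := Matrix.mul_nonsing_inv u hud
  have huu' : u⁻¹ * u = 1 := Matrix.nonsing_inv_mul u hud
  set X : Fin 2 → Fin 2 → M4' := fun i j => (α i)⁻¹ • (u * S i j * u⁻¹) with hXdef
  have hX : ∀ i j : Fin 2, X i j = (α i)⁻¹ • (u * S i j * u⁻¹) := fun i j => by rw [hXdef]
  have hCX : ∀ i j : Fin 2, ∑ k : Fin 2, C' i k * X k j = if i = j then (1 : M4') else 0 := by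
    intro i j
    have hterm : ∀ k : Fin 2, C' i k * X k j = u * (C i k * S k j) * u⁻¹ := by
      intro k
      rw [hC', hX, smul_mul_assoc, mul_smul_comm, smul_smul, mul_inv_cancel₀ (hα k), one_smul]
      simp only [mul_assoc]
      rw [Matrix.nonsing_inv_mul_cancel_left _ _ hud]
    rw [Finset.sum_congr rfl fun k _ => hterm k]
    rw [← Finset.sum_mul, ← Finset.mul_sum, hS1]
    split <;> simp [huu]
  have hS'X : ∀ m j : Fin 2, S' m j = X m j := by
    intro m j
    calc S' m j = ∑ i : Fin 2, S' m i * (if i = j then (1 : M4') else 0) := by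
          simp [mul_ite, Finset.sum_ite_eq']
      _ = ∑ i : Fin 2, S' m i * (∑ k : Fin 2, C' i k * X k j) := by simp_rw [hCX]
      _ = ∑ k : Fin 2, (∑ i : Fin 2, S' m i * C' i k) * X k j := by
          simp_rw [Finset.mul_sum, Finset.sum_mul, ← mul_assoc]
          rw [Finset.sum_comm]
      _ = ∑ k : Fin 2, (if m = k then (1 : M4') else 0) * X k j := by simp_rw [hS2']
      _ = X m j := by simp [ite_mul, Finset.sum_ite_eq]
  intro v i j
  have hterm : ∀ k : Fin 2, C' i k * v * S' k j = u * (C i k * (u⁻¹ * v * u) * S k j) * u⁻¹ := by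
    intro k
    rw [hS'X, hC', hX, smul_mul_assoc, smul_mul_assoc, mul_smul_comm, smul_smul,
      mul_inv_cancel₀ (hα k), one_smul]
    simp only [mul_assoc]
  rw [Finset.sum_congr rfl fun k _ => hterm k, ← Finset.sum_mul, ← Finset.mul_sum]


end DDaux


open DDaux in

/-- Two inner Hopf-algebra actions `c_ij · v = Σₖ C i k * v * S k j` and
`c_ij * v = Σₖ C' i k * v * S' k j` of the Dipper–Donkin quantum `GL₂` on
`M₄(ℂ)`, arising from two representations `c_ij ↦ C i j` and `c_ij ↦ C' i j`
(with `S`, `S'` the blocks of the inverses of the `8×8` block matrices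
`(C i j)`, `(C' i j)`), are equivalent iff `C' i j = αⱼ • (u * C i j * u⁻¹)`
for some invertible `u` and nonzero scalars `α₁, α₂`.  Moreover, if `u` can be
taken to be the identity, the two actions coincide. -/
theorem dipper_donkin_actions_equivalence
    (q : ℂ) (hq : ∀ m : ℕ, 0 < m → q ^ m ≠ 1)
    (C C' S S' : Fin 2 → Fin 2 → Matrix (Fin 4) (Fin 4) ℂ)
    -- Dipper–Donkin relations for the representation `c_ij ↦ C i j`
    (h1 : C 0 0 * C 0 1 = C 0 1 * C 0 0)
    (h2 : C 1 0 * C 0 0 = q • (C 0 0 * C 1 0))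
    (h3 : C 1 1 * C 0 1 = q • (C 0 1 * C 1 1))
    (h4 : C 1 0 * C 1 1 = C 1 1 * C 1 0)
    (h5 : C 1 0 * C 0 1 = q • (C 0 1 * C 1 0))
    (h6 : C 1 1 * C 0 0 - C 0 0 * C 1 1 = (q - 1) • (C 0 1 * C 1 0))
    (hdet : IsUnit (C 0 0 * C 1 1 - C 0 1 * C 1 0))
    -- Dipper–Donkin relations for the representation `c_ij ↦ C' i j`
    (h1' : C' 0 0 * C' 0 1 = C' 0 1 * C' 0 0)
    (h2' : C' 1 0 * C' 0 0 = q • (C' 0 0 * C' 1 0))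
    (h3' : C' 1 1 * C' 0 1 = q • (C' 0 1 * C' 1 1))
    (h4' : C' 1 0 * C' 1 1 = C' 1 1 * C' 1 0)
    (h5' : C' 1 0 * C' 0 1 = q • (C' 0 1 * C' 1 0))
    (h6' : C' 1 1 * C' 0 0 - C' 0 0 * C' 1 1 = (q - 1) • (C' 0 1 * C' 1 0))
    (hdet' : IsUnit (C' 0 0 * C' 1 1 - C' 0 1 * C' 1 0))
    -- `S` is the two-sided blockwise inverse of the block matrix `(C i j)`
    (hS1 : ∀ i j : Fin 2, ∑ k : Fin 2, C i k * S k j =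
      if i = j then (1 : Matrix (Fin 4) (Fin 4) ℂ) else 0)
    (hS2 : ∀ i j : Fin 2, ∑ k : Fin 2, S i k * C k j =
      if i = j then (1 : Matrix (Fin 4) (Fin 4) ℂ) else 0)
    -- `S'` is the two-sided blockwise inverse of the block matrix `(C' i j)`
    (hS1' : ∀ i j : Fin 2, ∑ k : Fin 2, C' i k * S' k j =
      if i = j then (1 : Matrix (Fin 4) (Fin 4) ℂ) else 0)
    (hS2' : ∀ i j : Fin 2, ∑ k : Fin 2, S' i k * C' k j =
      if i = j then (1 : Matrix (Fin 4) (Fin 4) ℂ) else 0) :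
    -- the two actions are equivalent iff the representations differ by
    -- conjugation and columnwise nonzero scalars
    ((∃ u : Matrix (Fin 4) (Fin 4) ℂ, IsUnit u ∧
        ∀ (v : Matrix (Fin 4) (Fin 4) ℂ) (i j : Fin 2),
          ∑ k : Fin 2, C' i k * (u * v * u⁻¹) * S' k j =
            u * (∑ k : Fin 2, C i k * v * S k j) * u⁻¹) ↔
      (∃ (u : Matrix (Fin 4) (Fin 4) ℂ) (α : Fin 2 → ℂ), IsUnit u ∧
        (∀ j : Fin 2, α j ≠ 0) ∧
        ∀ i j : Fin 2, C' i j = α j • (u * C i j * u⁻¹))) ∧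
    -- moreover, if `u` can be taken to be the identity, the actions coincide
    ((∃ α : Fin 2 → ℂ, (∀ j : Fin 2, α j ≠ 0) ∧
        ∀ i j : Fin 2, C' i j = α j • C i j) →
      ∀ (v : Matrix (Fin 4) (Fin 4) ℂ) (i j : Fin 2),
        ∑ k : Fin 2, C' i k * v * S' k j = ∑ k : Fin 2, C i k * v * S k j) := by
  constructor
  · constructor
    · rintro ⟨u, hu, hact⟩
      have hud : IsUnit u.det := (Matrix.isUnit_iff_isUnit_det u).mp hu
      have huu : u * u⁻¹ = 1 := Matrix.mul_nonsing_inv u hud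
      have huu' : u⁻¹ * u = 1 := Matrix.nonsing_inv_mul u hud
      have hq1 : q - 1 ≠ 0 := sub_ne_zero.mpr (by simpa using hq 1 one_pos)
      set D : Fin 2 → Fin 2 → M4 := fun i j => u⁻¹ * C' i j * u with hDdef0
      set T : Fin 2 → Fin 2 → M4 := fun i j => u⁻¹ * S' i j * u with hTdef0
      have hDdef : ∀ i j : Fin 2, D i j = u⁻¹ * C' i j * u := fun i j => by rw [hDdef0]
      have hTdef : ∀ i j : Fin 2, T i j = u⁻¹ * S' i j * u := fun i j => by rw [hTdef0]
      have hconj : ∀ X Y : M4, (u⁻¹ * X * u) * (u⁻¹ * Y * u) = u⁻¹ * (X * Y) * u := by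
        intro X Y
        simp only [mul_assoc]
        rw [Matrix.mul_nonsing_inv_cancel_left _ _ hud]
      -- blockwise inverses for D, T
      have hDT1 : ∀ i j : Fin 2, ∑ k : Fin 2, D i k * T k j = if i = j then (1 : M4) else 0 := by
        intro i j
        calc ∑ k : Fin 2, D i k * T k j = ∑ k : Fin 2, u⁻¹ * (C' i k * S' k j) * u :=
              Finset.sum_congr rfl fun k _ => by rw [hDdef, hTdef, hconj]
          _ = u⁻¹ * (∑ k : Fin 2, C' i k * S' k j) * u := by rw [Finset.mul_sum, Finset.sum_mul]
          _ = _ := by rw [hS1']; split <;> simp [huu']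
      have hDT2 : ∀ i j : Fin 2, ∑ k : Fin 2, T i k * D k j = if i = j then (1 : M4) else 0 := by
        intro i j
        calc ∑ k : Fin 2, T i k * D k j = ∑ k : Fin 2, u⁻¹ * (S' i k * C' k j) * u :=
              Finset.sum_congr rfl fun k _ => by rw [hDdef, hTdef, hconj]
          _ = u⁻¹ * (∑ k : Fin 2, S' i k * C' k j) * u := by rw [Finset.mul_sum, Finset.sum_mul]
          _ = _ := by rw [hS2']; split <;> simp [huu']
      -- transported action identity
      have hDact : ∀ (v : M4) (i j : Fin 2),
          ∑ k : Fin 2, D i k * v * T k j = ∑ k : Fin 2, C i k * v * S k j := by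
        intro v i j
        calc ∑ k : Fin 2, D i k * v * T k j
            = ∑ k : Fin 2, u⁻¹ * (C' i k * (u * v * u⁻¹) * S' k j) * u :=
              Finset.sum_congr rfl fun k _ => by rw [hDdef, hTdef]; simp only [mul_assoc]
          _ = u⁻¹ * (∑ k : Fin 2, C' i k * (u * v * u⁻¹) * S' k j) * u := by
              rw [Finset.mul_sum, Finset.sum_mul]
          _ = u⁻¹ * (u * (∑ k : Fin 2, C i k * v * S k j) * u⁻¹) * u := by rw [hact]
          _ = ∑ k : Fin 2, C i k * v * S k j := by
              simp only [mul_assoc, huu', mul_one]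
              rw [Matrix.nonsing_inv_mul_cancel_left _ _ hud]
      -- D satisfies the needed relations
      have hconjsmul : ∀ (r : ℂ) (X : M4), u⁻¹ * (r • X) * u = r • (u⁻¹ * X * u) := by
        intro r X; rw [Matrix.mul_smul, Matrix.smul_mul]
      have hDrel2 : D 1 0 * D 0 0 = q • (D 0 0 * D 1 0) := by
        rw [hDdef, hDdef, hconj, h2', hconjsmul, ← hconj, ← hDdef, ← hDdef]
      have hDrel3 : D 1 1 * D 0 1 = q • (D 0 1 * D 1 1) := by
        rw [hDdef, hDdef, hconj, h3', hconjsmul, ← hconj, ← hDdef, ← hDdef]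
      have hDrel6 : D 1 1 * D 0 0 - D 0 0 * D 1 1 = (q - 1) • (D 0 1 * D 1 0) := by
        rw [hDdef 1 1, hDdef 0 0, hDdef 0 1, hDdef 1 0, hconj, hconj, hconj,
          ← hconjsmul, ← h6', Matrix.mul_sub, Matrix.sub_mul]
      -- contraction: D in terms of C with central coefficients
      have hkeyF : ∀ (v : M4) (i l : Fin 2),
          D i l * v = ∑ k : Fin 2, C i k * v * (∑ j : Fin 2, S k j * D j l) :=
        contract_right hDT2 hDact
      choose f hf using central_of (G := fun k l => ∑ j : Fin 2, S k j * D j l) hS2 hkeyF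
      have hkeyE : ∀ (v : M4) (i l : Fin 2),
          C i l * v = ∑ k : Fin 2, D i k * v * (∑ j : Fin 2, T k j * C j l) :=
        contract_right hS2 (fun v i j => (hDact v i j).symm)
      choose e he using central_of (G := fun k l => ∑ j : Fin 2, T k j * C j l) hDT2 hkeyE
      have hDval : ∀ i l : Fin 2, D i l = ∑ k : Fin 2, f k l • C i k := by
        intro i l
        have h0 := hkeyF 1 i l
        rw [mul_one] at h0
        rw [h0]
        exact Finset.sum_congr rfl fun k _ => by rw [hf k l, mul_one, mul_smul_comm, mul_one]
      have hCval : ∀ i l : Fin 2, C i l = ∑ k : Fin 2, e k l • D i k := by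
        intro i l
        have h0 := hkeyE 1 i l
        rw [mul_one] at h0
        rw [h0]
        exact Finset.sum_congr rfl fun k _ => by rw [he k l, mul_one, mul_smul_comm, mul_one]
      -- the 2x2 scalar matrices f, e are mutually inverse
      have hge : ∀ m l : Fin 2, (∑ k : Fin 2, e k l * f m k) = if m = l then 1 else 0 := by
        intro m l
        have hcomb : ∀ i : Fin 2,
            ∑ mm : Fin 2, ((∑ k : Fin 2, e k l * f mm k) - if mm = l then 1 else 0) • C i mm = 0 := by
          intro i
          have h1 := hCval i l
          simp_rw [hDval] at h1
          simp_rw [Finset.smul_sum, smul_smul] at h1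
          rw [Finset.sum_comm] at h1
          simp_rw [← Finset.sum_smul] at h1
          have hsum2 : ∑ mm : Fin 2, (if mm = l then (1:ℂ) else 0) • C i mm = C i l := by
            simp [ite_smul, Finset.sum_ite_eq']
          simp_rw [sub_smul, Finset.sum_sub_distrib]
          rw [← h1, hsum2, sub_self]
        have := coeffs_zero hS2 _ hcomb m
        exact sub_eq_zero.mp this
      set a := f 0 0 with hadef
      set b := f 0 1 with hbdef
      set c := f 1 0 with hcdef
      set d := f 1 1 with hddef
      have hr1 : e 0 0 * a + e 1 0 * b = 1 := by simpa [Fin.sum_univ_two] using hge 0 0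
      have hr4 : e 0 1 * c + e 1 1 * d = 1 := by simpa [Fin.sum_univ_two] using hge 1 1
      -- column expansions of D
      have hDcol0 : ∀ i : Fin 2, D i 0 = a • C i 0 + c • C i 1 := by
        intro i; rw [hDval i 0, Fin.sum_univ_two]
      have hDcol1 : ∀ i : Fin 2, D i 1 = b • C i 0 + d • C i 1 := by
        intro i; rw [hDval i 1, Fin.sum_univ_two]
      have h6rw : C 1 1 * C 0 0 = C 0 0 * C 1 1 + (q - 1) • (C 0 1 * C 1 0) := by
        have h' := sub_eq_iff_eq_add.mp h6
        rw [h', add_comm]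
      -- relation computations forcing off-diagonal scalars to vanish
      have hexp2 : (a * c * (q - 1)) • (C 0 0 * C 1 1 - C 0 1 * C 1 0)
          = q • (D 0 0 * D 1 0) - D 1 0 * D 0 0 := by
        rw [hDcol0 0, hDcol0 1]
        simp only [add_mul, mul_add, smul_mul_assoc, mul_smul_comm, smul_add, smul_smul, smul_sub]
        rw [h2, h5, h3, h6rw]
        module
      have hac : a * c = 0 := by
        have hz : (a * c * (q - 1)) • (C 0 0 * C 1 1 - C 0 1 * C 1 0) = 0 := by
          rw [hexp2, hDrel2, sub_self]
        rcases mul_eq_zero.mp (smul_unit_eq_zero hdet hz) with h | h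
        · exact h
        · exact absurd h hq1
      have hexp3 : (b * d * (q - 1)) • (C 0 0 * C 1 1 - C 0 1 * C 1 0)
          = q • (D 0 1 * D 1 1) - D 1 1 * D 0 1 := by
        rw [hDcol1 0, hDcol1 1]
        simp only [add_mul, mul_add, smul_mul_assoc, mul_smul_comm, smul_add, smul_smul, smul_sub]
        rw [h2, h5, h3, h6rw]
        module
      have hbd : b * d = 0 := by
        have hz : (b * d * (q - 1)) • (C 0 0 * C 1 1 - C 0 1 * C 1 0) = 0 := by
          rw [hexp3, hDrel3, sub_self]
        rcases mul_eq_zero.mp (smul_unit_eq_zero hdet hz) with h | h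
        · exact h
        · exact absurd h hq1
      have hexp6 : (b * c * (q - 1)) • (C 0 0 * C 1 1 - C 0 1 * C 1 0)
          = (q - 1) • (D 0 1 * D 1 0) - (D 1 1 * D 0 0 - D 0 0 * D 1 1) := by
        rw [hDcol0 0, hDcol0 1, hDcol1 0, hDcol1 1]
        simp only [add_mul, mul_add, smul_mul_assoc, mul_smul_comm, smul_add, smul_smul, smul_sub,
          sub_sub_eq_add_sub]
        rw [h2, h5, h3, h6rw]
        module
      have hbc : b * c = 0 := by
        have hz : (b * c * (q - 1)) • (C 0 0 * C 1 1 - C 0 1 * C 1 0) = 0 := by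
          rw [hexp6, ← hDrel6, sub_self]
        rcases mul_eq_zero.mp (smul_unit_eq_zero hdet hz) with h | h
        · exact h
        · exact absurd h hq1
      -- conclude b = c = 0 and a, d nonzero
      have hb0 : b = 0 := by
        by_contra hb
        have hcc : c = 0 := (mul_eq_zero.mp hbc).resolve_left hb
        have hdd : d = 0 := (mul_eq_zero.mp hbd).resolve_left hb
        rw [hcc, hdd] at hr4
        simp at hr4
      have hc0 : c = 0 := by
        by_contra hc
        have haa : a = 0 := by
          rcases mul_eq_zero.mp hac with h | h
          · exact h
          · exact absurd h hc
        rw [haa, hb0] at hr1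
        simp at hr1
      have ha : a ≠ 0 := fun h => by rw [h, hb0] at hr1; simp at hr1
      have hd : d ≠ 0 := fun h => by rw [hc0, h] at hr4; simp at hr4
      -- assemble the conclusion
      refine ⟨u, ![a, d], hu, ?_, ?_⟩
      · intro j; fin_cases j <;> simpa
      · intro i j
        have hC'D : C' i j = u * D i j * u⁻¹ := by
          rw [hDdef, mul_assoc u⁻¹, Matrix.mul_nonsing_inv_cancel_left _ _ hud,
            mul_assoc, huu, mul_one]
        have hDij : D i j = (![a, d] j) • C i j := by
          fin_cases j
          · simpa [hc0] using hDcol0 i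
          · simpa [hb0] using hDcol1 i
        rw [hC'D, hDij, Matrix.mul_smul, Matrix.smul_mul]
    · rintro ⟨u, α, hu, hα, hC'⟩
      refine ⟨u, hu, fun v i j => ?_⟩
      have hud : IsUnit u.det := (Matrix.isUnit_iff_isUnit_det u).mp hu
      have huu' : u⁻¹ * u = 1 := Matrix.nonsing_inv_mul u hud
      have h := helper_back hu hS1 hS2' hα hC' (u * v * u⁻¹) i j
      have hval : u⁻¹ * (u * v * u⁻¹) * u = v := by
        rw [mul_assoc u v u⁻¹, Matrix.nonsing_inv_mul_cancel_left _ _ hud,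
          mul_assoc, huu', mul_one]
      rw [h, hval]
  · rintro ⟨α, hα, hC'⟩
    intro v i j
    have h := helper_back isUnit_one hS1 hS2' hα
      (fun i j => by rw [hC' i j]; simp) v i j
    simpa using h
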